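/- Let α < 1 be real, let V(n,k) be an arbitrary array of real weights, and let 1 ≤ l ≤ n. Then the expected number of blocks of size l under the Gibbs sampling formula satisfies: ∑ c_l·G(c) = binom(n,l)·(1−α)_{l−1}·∑_{k=1}^{n−l+1} V(n,k)·S(n−l, k−1; α), where the sum ranges over all tuples (c_1,…,c_n) of nonnegative integers with ∑_{i=1}^{n} i·c_i = n. -/

import Mathlib

/-- Rising factorial `(x)_n = x(x+1)⋯(x+n−1)`. -/
noncomputable def risingFac (x : ℝ) (n : ℕ) : ℝ := ∏ i ∈ Finset.range n, (x + i)

/-- Rising factorial with increment `α`: `(x)_{n↑α} = ∏_{i<n} (x + iα)`. -/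
noncomputable def risingFacInc (x α : ℝ) (n : ℕ) : ℝ := ∏ i ∈ Finset.range n, (x + i * α)

/-- Falling factorial `(x)_{[n]} = x(x−1)⋯(x−n+1)`. -/
noncomputable def fallingFac (x : ℝ) (n : ℕ) : ℝ := ∏ i ∈ Finset.range n, (x - i)

/-- Compositions of `n` into `k` positive parts, as functions `Fin k → ℕ`. -/
def compositions (n k : ℕ) : Finset (Fin k → ℕ) :=
  (Fintype.piFinset fun _ => Finset.range (n + 1)).filter
    (fun f => (∀ i, 0 < f i) ∧ ∑ i, f i = n)

/-- Tuples of `k` nonnegative integers summing to `n`. -/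
def weakCompositions (n k : ℕ) : Finset (Fin k → ℕ) :=
  (Fintype.piFinset fun _ => Finset.range (n + 1)).filter (fun f => ∑ i, f i = n)

/-- Generalized (central) Stirling number
`S(n,k;α) = (n!/k!) ∑_{(n_1,…,n_k)} ∏_j (1−α)_{n_j−1}/n_j!`,
the sum over compositions of `n` into `k` positive parts. -/
noncomputable def genStirling (α : ℝ) (n k : ℕ) : ℝ :=
  (Nat.factorial n : ℝ) / (Nat.factorial k : ℝ) *
    ∑ f ∈ compositions n k, ∏ j, risingFac (1 - α) (f j - 1) / (Nat.factorial (f j) : ℝ)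

/-- Non-central generalized Stirling number
`S(n,k;α,γ) = ∑_{s=k}^n C(n,s) S(s,k;α) (−γ)_{n−s}`. -/
noncomputable def genStirlingNC (α γ : ℝ) (n k : ℕ) : ℝ :=
  ∑ s ∈ Finset.Icc k n, (n.choose s : ℝ) * genStirling α s k * risingFac (-γ) (n - s)

/-- Count vectors `(c_1,…,c_n)` with `∑ i·c_i = n`, encoded as `c : Fin n → ℕ`
where index `i` represents size `i+1`. -/
def countVectors (n : ℕ) : Finset (Fin n → ℕ) :=
  (Fintype.piFinset fun _ => Finset.range (n + 1)).filter
    (fun c => ∑ i, (i.1 + 1) * c i = n)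

/-- The Gibbs sampling formula
`G(c) = n!·V(n,k)·∏_i [(1−α)_{i−1}]^{c_i}/((i!)^{c_i} c_i!)`, `k = ∑ c_i`. -/
noncomputable def gibbsSampling (α : ℝ) (V : ℕ → ℕ → ℝ) (n : ℕ) (c : Fin n → ℕ) : ℝ :=
  (Nat.factorial n : ℝ) * V n (∑ i, c i) *
    ∏ i, (risingFac (1 - α) i.1) ^ (c i) /
      ((Nat.factorial (i.1 + 1) : ℝ) ^ (c i) * (Nat.factorial (c i) : ℝ))

open Finset

noncomputable def Pw (w : ℕ → ℝ) {n : ℕ} (c : Fin n → ℕ) : ℝ :=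
  ∏ i, w (i.1 + 1) ^ (c i) / (Nat.factorial (c i) : ℝ)

lemma mem_countVectors {n : ℕ} {c : Fin n → ℕ} :
    c ∈ countVectors n ↔ (∀ i, c i ≤ n) ∧ ∑ i, (i.1 + 1) * c i = n := by
  simp [countVectors, Fintype.mem_piFinset, Nat.lt_succ_iff]

lemma mem_compositions {n k : ℕ} {f : Fin k → ℕ} :
    f ∈ compositions n k ↔ (∀ i, f i ≤ n) ∧ (∀ i, 0 < f i) ∧ ∑ i, f i = n := by
  simp [compositions, Fintype.mem_piFinset, Nat.lt_succ_iff]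

lemma prod_fin_restrict {m n : ℕ} (hmn : m ≤ n) (c : Fin n → ℕ)
    (h0 : ∀ i : Fin n, m ≤ i.1 → c i = 0) (f : ℕ → ℕ → ℝ) (hf : ∀ i, f i 0 = 1) :
    ∏ i : Fin n, f i.1 (c i) = ∏ i : Fin m, f i.1 (c ⟨i.1, lt_of_lt_of_le i.isLt hmn⟩) := by
  set G : ℕ → ℝ := fun j => if h : j < n then f j (c ⟨j, h⟩) else 1 with hG
  have h1 : ∏ i : Fin n, f i.1 (c i) = ∏ j ∈ Finset.range n, G j := by
    rw [← Fin.prod_univ_eq_prod_range]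
    exact Finset.prod_congr rfl fun i _ => by simp [hG, i.isLt]
  have h2 : ∏ i : Fin m, f i.1 (c ⟨i.1, lt_of_lt_of_le i.isLt hmn⟩)
      = ∏ j ∈ Finset.range m, G j := by
    rw [← Fin.prod_univ_eq_prod_range]
    refine Finset.prod_congr rfl fun i _ => ?_
    have hi : i.1 < n := lt_of_lt_of_le i.isLt hmn
    simp [hG, hi]
  rw [h1, h2]
  symm
  apply Finset.prod_subset (Finset.range_subset_range.2 hmn)
  intro x hx hnx
  simp only [Finset.mem_range] at hx hnx
  have hxm : m ≤ x := le_of_not_gt hnx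
  simp [hG, hx, h0 ⟨x, hx⟩ hxm, hf]

lemma sum_fin_restrict {m n : ℕ} (hmn : m ≤ n) (c : Fin n → ℕ)
    (h0 : ∀ i : Fin n, m ≤ i.1 → c i = 0) (f : ℕ → ℕ → ℕ) (hf : ∀ i, f i 0 = 0) :
    ∑ i : Fin n, f i.1 (c i) = ∑ i : Fin m, f i.1 (c ⟨i.1, lt_of_lt_of_le i.isLt hmn⟩) := by
  set G : ℕ → ℕ := fun j => if h : j < n then f j (c ⟨j, h⟩) else 0 with hG
  have h1 : ∑ i : Fin n, f i.1 (c i) = ∑ j ∈ Finset.range n, G j := by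
    rw [← Fin.sum_univ_eq_sum_range]
    exact Finset.sum_congr rfl fun i _ => by simp [hG, i.isLt]
  have h2 : ∑ i : Fin m, f i.1 (c ⟨i.1, lt_of_lt_of_le i.isLt hmn⟩)
      = ∑ j ∈ Finset.range m, G j := by
    rw [← Fin.sum_univ_eq_sum_range]
    refine Finset.sum_congr rfl fun i _ => ?_
    have hi : i.1 < n := lt_of_lt_of_le i.isLt hmn
    simp [hG, hi]
  rw [h1, h2]
  symm
  apply Finset.sum_subset (Finset.range_subset_range.2 hmn)
  intro x hx hnx
  simp only [Finset.mem_range] at hx hnx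
  have hxm : m ≤ x := le_of_not_gt hnx
  simp [hG, hx, h0 ⟨x, hx⟩ hxm, hf]

lemma cv_zero_facts {n : ℕ} (p : Fin n) {c : Fin n → ℕ} (hc : c ∈ countVectors n)
    (hcp : 0 < c p) :
    (∀ i : Fin n, i ≠ p → n - (p.1 + 1) ≤ i.1 → c i = 0)
      ∧ (n - (p.1 + 1) ≤ p.1 → c p = 1) := by
  rw [mem_countVectors] at hc
  obtain ⟨hcle, hcsum⟩ := hc
  have hpn : p.1 + 1 ≤ n := p.isLt
  have fact1 : ∀ i : Fin n, (i.1 + 1) * c i ≤ n := by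
    intro i
    have h := Finset.single_le_sum (f := fun i : Fin n => (i.1 + 1) * c i)
      (fun _ _ => Nat.zero_le _) (Finset.mem_univ i)
    exact le_trans h (le_of_eq hcsum)
  constructor
  · intro i hip hmi
    by_contra h
    have hci : 1 ≤ c i := Nat.pos_of_ne_zero h
    have hpair : (p.1 + 1) * c p + (i.1 + 1) * c i ≤ n := by
      have hsub := Finset.sum_le_sum_of_subset
        (Finset.subset_univ ({p, i} : Finset (Fin n)))
        (f := fun i => (i.1 + 1) * c i)
      rw [Finset.sum_pair (Ne.symm hip)] at hsub
      simpa [hcsum] using hsub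
    have h1 : p.1 + 1 ≤ (p.1 + 1) * c p := Nat.le_mul_of_pos_right _ hcp
    have h2 : i.1 + 1 ≤ (i.1 + 1) * c i := Nat.le_mul_of_pos_right _ hci
    omega
  · intro hmp
    have h1 := fact1 p
    by_contra hne
    have h3 : 2 ≤ c p := by omega
    have h2 : 2 * (p.1 + 1) ≤ (p.1 + 1) * c p := by
      calc 2 * (p.1 + 1) = (p.1 + 1) * 2 := by ring
        _ ≤ (p.1 + 1) * c p := Nat.mul_le_mul_left _ h3
    omega

lemma lemA (w : ℕ → ℝ) (g : ℕ → ℝ) (n : ℕ) (p : Fin n) :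
    ∑ c ∈ countVectors n, (c p : ℝ) * g (∑ i, c i) * Pw w c
      = w (p.1 + 1) * ∑ c ∈ countVectors (n - (p.1 + 1)),
          g ((∑ i, c i) + 1) * Pw w c := by
  set m := n - (p.1 + 1) with hm
  have hmn : m ≤ n := Nat.sub_le _ _
  have hpn : p.1 + 1 ≤ n := p.isLt
  have step1 : ∑ c ∈ countVectors n, (c p : ℝ) * g (∑ i, c i) * Pw w c
      = ∑ c ∈ (countVectors n).filter (fun c => 0 < c p),
          (c p : ℝ) * g (∑ i, c i) * Pw w c := by
    symm
    apply Finset.sum_filter_of_ne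
    intro c _ hne
    by_contra h
    push_neg at h
    simp [Nat.le_zero.mp h] at hne
  rw [step1, Finset.mul_sum]
  refine Finset.sum_bij'
    (i := fun c _ => (fun i : Fin m =>
      c ⟨i.1, lt_of_lt_of_le i.isLt hmn⟩ - if i.1 = p.1 then 1 else 0))
    (j := fun c' _ => (fun i : Fin n =>
      (if h : i.1 < m then c' ⟨i.1, h⟩ else 0) + (if i = p then 1 else 0)))
    ?_ ?_ ?_ ?_ ?_
  · -- hi : image in countVectors m
    intro c hc
    rw [Finset.mem_filter] at hc
    obtain ⟨hcv, hcp⟩ := hc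
    rw [mem_countVectors] at hcv
    obtain ⟨hcle, hcsum⟩ := hcv
    have fact1 : ∀ i : Fin n, (i.1 + 1) * c i ≤ n := by
      intro i
      have h := Finset.single_le_sum (f := fun i : Fin n => (i.1 + 1) * c i)
        (fun _ _ => Nat.zero_le _) (Finset.mem_univ i)
      exact le_trans h (le_of_eq hcsum)
    have fact2 : ∀ i : Fin n, i ≠ p → m ≤ i.1 → c i = 0 := by
      intro i hip hmi
      by_contra h
      have hci : 1 ≤ c i := Nat.pos_of_ne_zero h
      have hpair : (p.1 + 1) * c p + (i.1 + 1) * c i ≤ n := by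
        have hsub := Finset.sum_le_sum_of_subset
          (Finset.subset_univ ({p, i} : Finset (Fin n)))
          (f := fun i => (i.1 + 1) * c i)
        rw [Finset.sum_pair (Ne.symm hip)] at hsub
        simpa [hcsum] using hsub
      have h1 : p.1 + 1 ≤ (p.1 + 1) * c p := Nat.le_mul_of_pos_right _ hcp
      have h2 : i.1 + 1 ≤ (i.1 + 1) * c i := Nat.le_mul_of_pos_right _ hci
      omega
    have fact3 : m ≤ p.1 → c p = 1 := by
      intro hmp
      have h1 := fact1 p
      by_contra hne
      have h3 : 2 ≤ c p := by omega
      have h2 : 2 * (p.1 + 1) ≤ (p.1 + 1) * c p := by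
        calc 2 * (p.1 + 1) = (p.1 + 1) * 2 := by ring
          _ ≤ (p.1 + 1) * c p := Nat.mul_le_mul_left _ h3
      omega
    have h0dec : ∀ i : Fin n, m ≤ i.1 → (c i - if i = p then 1 else 0) = 0 := by
      intro i hi
      by_cases h : i = p
      · subst h; simp [fact3 hi]
      · simp [h, fact2 i h hi]
    have sumdec : ∑ i : Fin n, (i.1 + 1) * (c i - if i = p then 1 else 0) = m := by
      have hsplit : ∑ i : Fin n, (i.1 + 1) * c i
          = ∑ i : Fin n, (i.1 + 1) * (c i - if i = p then 1 else 0)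
            + ∑ i : Fin n, (if i = p then i.1 + 1 else 0) := by
        rw [← Finset.sum_add_distrib]
        refine Finset.sum_congr rfl fun i _ => ?_
        by_cases h : i = p
        · subst h
          obtain ⟨q, hq⟩ : ∃ q, c i = q + 1 := ⟨c i - 1, by omega⟩
          simp [hq, Nat.mul_succ]
        · simp [h]
      rw [Finset.sum_ite_eq' Finset.univ p (fun i : Fin n => i.1 + 1)] at hsplit
      simp at hsplit
      omega
    have hrestr : ∑ i : Fin m, (i.1 + 1)
        * (c ⟨i.1, lt_of_lt_of_le i.isLt hmn⟩ - if i.1 = p.1 then 1 else 0)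
        = ∑ i : Fin n, (i.1 + 1) * (c i - if i = p then 1 else 0) := by
      rw [sum_fin_restrict hmn (fun i => c i - if i = p then 1 else 0) h0dec
        (fun a x => (a + 1) * x) (fun a => by simp)]
      refine Finset.sum_congr rfl fun i _ => ?_
      congr 2
      simp [Fin.ext_iff]
    have hsm : ∑ i : Fin m, (i.1 + 1)
        * (c ⟨i.1, lt_of_lt_of_le i.isLt hmn⟩ - if i.1 = p.1 then 1 else 0) = m :=
      hrestr.trans sumdec
    rw [mem_countVectors]
    refine ⟨?_, hsm⟩
    intro i
    have hle : (i.1 + 1) * (c ⟨i.1, lt_of_lt_of_le i.isLt hmn⟩ - if i.1 = p.1 then 1 else 0) ≤ m := by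
      have h := Finset.single_le_sum
        (f := fun i : Fin m => (i.1 + 1) * (c ⟨i.1, lt_of_lt_of_le i.isLt hmn⟩ - if i.1 = p.1 then 1 else 0))
        (fun _ _ => Nat.zero_le _) (Finset.mem_univ i)
      exact le_trans h (le_of_eq hsm)
    have h2 : c ⟨i.1, lt_of_lt_of_le i.isLt hmn⟩ - (if i.1 = p.1 then 1 else 0)
        ≤ (i.1 + 1) * (c ⟨i.1, lt_of_lt_of_le i.isLt hmn⟩ - if i.1 = p.1 then 1 else 0) :=
      Nat.le_mul_of_pos_left _ (by omega)
    exact le_trans h2 hle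
  · -- hj : image back in filtered set
    intro c' hc'
    rw [mem_countVectors] at hc'
    obtain ⟨hc'le, hc'sum⟩ := hc'
    have h0ext : ∀ i : Fin n, m ≤ i.1 → (if h : i.1 < m then c' ⟨i.1, h⟩ else 0) = 0 :=
      fun i hi => dif_neg (not_lt.2 hi)
    have sumext : ∑ i : Fin n, (i.1 + 1) * (if h : i.1 < m then c' ⟨i.1, h⟩ else 0) = m := by
      rw [sum_fin_restrict hmn (fun i => if h : i.1 < m then c' ⟨i.1, h⟩ else 0) h0ext
        (fun a x => (a + 1) * x) (fun a => by simp)]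
      refine Eq.trans ?_ hc'sum
      refine Finset.sum_congr rfl fun i _ => ?_
      simp [i.isLt]
    rw [Finset.mem_filter, mem_countVectors]
    refine ⟨⟨?_, ?_⟩, ?_⟩
    · intro i
      show (if h : i.1 < m then c' ⟨i.1, h⟩ else 0) + (if i = p then 1 else 0) ≤ n
      have hext : (if h : i.1 < m then c' ⟨i.1, h⟩ else 0) ≤ m := by
        split
        · exact hc'le _
        · exact Nat.zero_le _
      have hite : (if i = p then 1 else 0) ≤ 1 := by split <;> omega
      omega
    · have hsplit : ∑ i : Fin n, (i.1 + 1)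
          * ((if h : i.1 < m then c' ⟨i.1, h⟩ else 0) + (if i = p then 1 else 0))
          = ∑ i : Fin n, (i.1 + 1) * (if h : i.1 < m then c' ⟨i.1, h⟩ else 0)
            + ∑ i : Fin n, (if i = p then i.1 + 1 else 0) := by
        rw [← Finset.sum_add_distrib]
        refine Finset.sum_congr rfl fun i _ => ?_
        by_cases h : i = p <;> simp [h, Nat.mul_add]
      rw [hsplit, sumext, Finset.sum_ite_eq' Finset.univ p (fun i : Fin n => i.1 + 1)]
      simp
      omega
    · simp
  · -- left inverse
    intro c hc
    rw [Finset.mem_filter] at hc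
    obtain ⟨hcv, hcp⟩ := hc
    obtain ⟨fact2, fact3⟩ := cv_zero_facts p hcv hcp
    funext i
    show (if h : i.1 < m then
        (c ⟨(⟨i.1, h⟩ : Fin m).1, lt_of_lt_of_le (⟨i.1, h⟩ : Fin m).isLt hmn⟩
          - if (⟨i.1, h⟩ : Fin m).1 = p.1 then 1 else 0) else 0)
      + (if i = p then 1 else 0) = c i
    by_cases him : i.1 < m
    · rw [dif_pos him]
      by_cases hip : i = p
      · have hc2 : (⟨(⟨i.1, him⟩ : Fin m).1,
            lt_of_lt_of_le (⟨i.1, him⟩ : Fin m).isLt hmn⟩ : Fin n) = i := Fin.ext rfl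
        have hv : i.1 = p.1 := by rw [hip]
        rw [hc2]
        have hci : 0 < c i := by rw [hip]; exact hcp
        simp [hv, hip]
        omega
      · have hc2 : (⟨(⟨i.1, him⟩ : Fin m).1,
            lt_of_lt_of_le (⟨i.1, him⟩ : Fin m).isLt hmn⟩ : Fin n) = i := Fin.ext rfl
        have hv : ¬ (i.1 = p.1) := fun h => hip (Fin.ext h)
        rw [hc2]
        simp [hv, hip]
    · rw [dif_neg him]
      by_cases hip : i = p
      · subst hip
        simp [fact3 (le_of_not_gt him)]
      · simp [hip, fact2 i hip (le_of_not_gt him)]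
  · -- right inverse
    intro c' hc'
    funext i
    have hilt : i.1 < m := i.isLt
    simp only [dif_pos hilt]
    have h1 : (⟨i.1, hilt⟩ : Fin m) = i := by simp
    rw [h1]
    by_cases h : i.1 = p.1
    · have h2 : (⟨i.1, lt_of_lt_of_le hilt hmn⟩ : Fin n) = p := Fin.ext h
      simp [h, h2]
    · have h2 : ¬ ((⟨i.1, lt_of_lt_of_le hilt hmn⟩ : Fin n) = p) := fun hh => h (by
        have := congrArg Fin.val hh; simpa using this)
      simp [h, h2]
  · -- summand equality
    intro c hc
    rw [Finset.mem_filter] at hc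
    obtain ⟨hcv, hcp⟩ := hc
    obtain ⟨fact2, fact3⟩ := cv_zero_facts p hcv hcp
    have h0dec : ∀ i : Fin n, m ≤ i.1 → (c i - if i = p then 1 else 0) = 0 := by
      intro i hi
      by_cases h : i = p
      · subst h; simp [fact3 hi]
      · simp [h, fact2 i h hi]
    have hKdec : ∀ i : Fin m,
        c ⟨i.1, lt_of_lt_of_le i.isLt hmn⟩ - (if i.1 = p.1 then 1 else 0)
          = c ⟨i.1, lt_of_lt_of_le i.isLt hmn⟩
            - (if (⟨i.1, lt_of_lt_of_le i.isLt hmn⟩ : Fin n) = p then 1 else 0) := by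
      intro i
      congr 1
      simp [Fin.ext_iff]
    have hsum1 : ∑ i : Fin m,
        (c ⟨i.1, lt_of_lt_of_le i.isLt hmn⟩ - if i.1 = p.1 then 1 else 0)
        = ∑ i : Fin n, (c i - if i = p then 1 else 0) := by
      rw [sum_fin_restrict hmn (fun i => c i - if i = p then 1 else 0) h0dec
        (fun a x => x) (fun a => rfl)]
      exact Finset.sum_congr rfl fun i _ => hKdec i
    have hsum2 : ∑ i : Fin n, c i = (∑ i : Fin n, (c i - if i = p then 1 else 0)) + 1 := by
      have h1 : ∑ i : Fin n, c i
          = ∑ i : Fin n, ((c i - if i = p then 1 else 0) + (if i = p then 1 else 0)) := by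
        refine Finset.sum_congr rfl fun i _ => ?_
        by_cases h : i = p
        · subst h; simp; omega
        · simp [h]
      rw [h1, Finset.sum_add_distrib, Finset.sum_ite_eq' Finset.univ p (fun _ => 1)]
      simp
    have hprod : Pw w (fun i : Fin m =>
        c ⟨i.1, lt_of_lt_of_le i.isLt hmn⟩ - if i.1 = p.1 then 1 else 0)
        = ∏ i : Fin n, w (i.1 + 1) ^ (c i - if i = p then 1 else 0)
            / (Nat.factorial (c i - if i = p then 1 else 0) : ℝ) := by
      rw [prod_fin_restrict hmn (fun i => c i - if i = p then 1 else 0) h0dec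
        (fun a x => w (a + 1) ^ x / (Nat.factorial x : ℝ)) (fun a => by simp)]
      unfold Pw
      refine Finset.prod_congr rfl fun i _ => ?_
      simp only [Fin.ext_iff]
    rw [hsum1, hsum2, hprod]
    have hR : ∀ i : Fin n, i ≠ p →
        w (i.1 + 1) ^ (c i - if i = p then 1 else 0)
          / (Nat.factorial (c i - if i = p then 1 else 0) : ℝ)
        = w (i.1 + 1) ^ (c i) / (Nat.factorial (c i) : ℝ) := by
      intro i h; simp [h]
    unfold Pw
    rw [← Finset.mul_prod_erase Finset.univ _ (Finset.mem_univ p),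
        ← Finset.mul_prod_erase Finset.univ
          (fun i : Fin n => w (i.1 + 1) ^ (c i - if i = p then 1 else 0)
            / (Nat.factorial (c i - if i = p then 1 else 0) : ℝ)) (Finset.mem_univ p)]
    have hRprod : ∏ i ∈ Finset.univ.erase p,
        w (i.1 + 1) ^ (c i - if i = p then 1 else 0)
          / (Nat.factorial (c i - if i = p then 1 else 0) : ℝ)
        = ∏ i ∈ Finset.univ.erase p, w (i.1 + 1) ^ (c i) / (Nat.factorial (c i) : ℝ) := by
      exact Finset.prod_congr rfl fun i hi => hR i (Finset.ne_of_mem_erase hi)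
    rw [hRprod]
    obtain ⟨q, hq⟩ : ∃ q, c p = q + 1 := ⟨c p - 1, by omega⟩
    have key : (c p : ℝ) * (w (p.1 + 1) ^ (c p) / (Nat.factorial (c p) : ℝ))
        = w (p.1 + 1) * (w (p.1 + 1) ^ (c p - if p = p then 1 else 0)
            / (Nat.factorial (c p - if p = p then 1 else 0) : ℝ)) := by
      simp only [if_pos rfl, hq, Nat.add_sub_cancel]
      rw [Nat.factorial_succ, pow_succ]
      have hfac : (Nat.factorial q : ℝ) ≠ 0 := Nat.cast_ne_zero.2 (Nat.factorial_ne_zero q)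
      push_cast
      field_simp
    set R := ∏ i ∈ Finset.univ.erase p, w (i.1 + 1) ^ (c i) / (Nat.factorial (c i) : ℝ)
    set G := g ((∑ i : Fin n, (c i - if i = p then 1 else 0)) + 1)
    calc (c p : ℝ) * G * (w (p.1 + 1) ^ (c p) / (Nat.factorial (c p) : ℝ) * R)
        = ((c p : ℝ) * (w (p.1 + 1) ^ (c p) / (Nat.factorial (c p) : ℝ))) * G * R := by ring
      _ = (w (p.1 + 1) * (w (p.1 + 1) ^ (c p - if p = p then 1 else 0)
            / (Nat.factorial (c p - if p = p then 1 else 0) : ℝ))) * G * R := by rw [key]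
      _ = w (p.1 + 1) * (G * (w (p.1 + 1) ^ (c p - if p = p then 1 else 0)
            / (Nat.factorial (c p - if p = p then 1 else 0) : ℝ) * R)) := by ring

lemma T_rec (w : ℕ → ℝ) (n k : ℕ) :
    ∑ f ∈ compositions n (k + 1), ∏ j, w (f j)
      = ∑ p : Fin n, w (p.1 + 1) * ∑ f ∈ compositions (n - (p.1 + 1)) k, ∏ j, w (f j) := by
  have hsig : ∑ p : Fin n, w (p.1 + 1) * ∑ f ∈ compositions (n - (p.1 + 1)) k, ∏ j, w (f j)
      = ∑ x ∈ (Finset.univ : Finset (Fin n)).sigma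
          (fun p => compositions (n - (p.1 + 1)) k), w (x.1.1 + 1) * ∏ j, w (x.2 j) := by
    rw [Finset.sum_sigma]
    exact Finset.sum_congr rfl fun p _ => by rw [Finset.mul_sum]
  rw [hsig]
  refine Finset.sum_bij'
    (i := fun f hf => (⟨⟨f (Fin.last k) - 1, by
      rw [mem_compositions] at hf
      have h1 := hf.2.1 (Fin.last k)
      have h2 := hf.1 (Fin.last k)
      have h3 : 1 ≤ n := le_trans h1 h2
      omega⟩, Fin.init f⟩ : Σ _ : Fin n, Fin k → ℕ))
    (j := fun x _ => Fin.snoc x.2 (x.1.1 + 1))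
    ?_ ?_ ?_ ?_ ?_
  · -- membership forward
    intro f hf
    rw [mem_compositions] at hf
    obtain ⟨hle, hpos, hsum⟩ := hf
    rw [Finset.mem_sigma]
    refine ⟨Finset.mem_univ _, ?_⟩
    have hlast_le : f (Fin.last k) ≤ n := by
      have h := Finset.single_le_sum (f := fun i : Fin (k+1) => f i)
        (fun _ _ => Nat.zero_le _) (Finset.mem_univ (Fin.last k))
      exact le_trans h (le_of_eq hsum)
    have hlast_pos := hpos (Fin.last k)
    have hv : f (Fin.last k) - 1 + 1 = f (Fin.last k) := by omega
    have hinitsum : ∑ i : Fin k, Fin.init f i = n - f (Fin.last k) := by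
      have h := Fin.sum_univ_castSucc (f := f)
      have h2 : ∑ i : Fin k, Fin.init f i = ∑ i : Fin k, f i.castSucc := rfl
      omega
    rw [mem_compositions]
    refine ⟨?_, fun i => hpos _, ?_⟩
    · intro i
      have h := Finset.single_le_sum (f := fun i : Fin k => Fin.init f i)
        (fun _ _ => Nat.zero_le _) (Finset.mem_univ i)
      rw [hinitsum] at h
      simpa [hv] using h
    · show ∑ i : Fin k, Fin.init f i = n - (f (Fin.last k) - 1 + 1)
      rw [hv, hinitsum]
  · -- membership backward
    intro x hx
    rw [Finset.mem_sigma] at hx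
    obtain ⟨-, hx⟩ := hx
    rw [mem_compositions] at hx
    obtain ⟨hle, hpos, hsum⟩ := hx
    have hpn : x.1.1 + 1 ≤ n := x.1.isLt
    rw [mem_compositions]
    refine ⟨?_, ?_, ?_⟩
    · intro i
      induction i using Fin.lastCases with
      | last => simpa using hpn
      | cast j =>
        have := hle j
        simp only [Fin.snoc_castSucc]
        omega
    · intro i
      induction i using Fin.lastCases with
      | last => simp
      | cast j => simpa using hpos j
    · rw [Fin.sum_univ_castSucc]
      simp only [Fin.snoc_castSucc, Fin.snoc_last]
      omega
  · -- left inverse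
    intro f hf
    rw [mem_compositions] at hf
    have h1 := hf.2.1 (Fin.last k)
    have hv : f (Fin.last k) - 1 + 1 = f (Fin.last k) := by omega
    simp only [hv]
    exact Fin.snoc_init_self f
  · -- right inverse
    intro x hx
    obtain ⟨p, f'⟩ := x
    have h1 : (Fin.snoc f' (p.1 + 1) : Fin (k+1) → ℕ) (Fin.last k) = p.1 + 1 :=
      Fin.snoc_last _ _
    refine Sigma.ext ?_ ?_
    · exact Fin.ext (by simp [h1])
    · simp only [Fin.init_snoc]
      exact HEq.rfl
  · -- summand
    intro f hf
    rw [mem_compositions] at hf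
    have h1 := hf.2.1 (Fin.last k)
    rw [Fin.prod_univ_castSucc]
    show (∏ i : Fin k, w (f i.castSucc)) * w (f (Fin.last k))
      = w (f (Fin.last k) - 1 + 1) * ∏ j : Fin k, w (Fin.init f j)
    have hv : f (Fin.last k) - 1 + 1 = f (Fin.last k) := by omega
    rw [hv, mul_comm]
    rfl

lemma lemB (w : ℕ → ℝ) : ∀ (k n : ℕ),
    ∑ f ∈ compositions n k, ∏ j, w (f j)
      = (Nat.factorial k : ℝ) *
          ∑ c ∈ (countVectors n).filter (fun c => ∑ i, c i = k), Pw w c := by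
  intro k
  induction k with
  | zero =>
    intro n
    cases n with
    | zero =>
      have h1 : compositions 0 0 = Finset.univ := by
        ext f
        simp [mem_compositions]
        exact Subsingleton.elim _ _
      have h2 : (countVectors 0).filter (fun c => ∑ i, c i = 0) = Finset.univ := by
        ext c
        simp [mem_countVectors]
        exact Subsingleton.elim _ _
      have h3 : (Finset.univ : Finset (Fin 0 → ℕ)) = {fun i => i.elim0} :=
        Finset.eq_singleton_iff_unique_mem.mpr
          ⟨Finset.mem_univ _, fun x _ => Subsingleton.elim _ _⟩
      rw [h1, h2, h3]
      simp [Pw]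
    | succ n =>
      have h1 : compositions (n+1) 0 = ∅ := by
        ext f
        simp [mem_compositions]
      have h2 : (countVectors (n+1)).filter (fun c => ∑ i, c i = 0) = ∅ := by
        ext c
        simp only [Finset.mem_filter, mem_countVectors, Finset.notMem_empty, iff_false]
        rintro ⟨⟨-, hs⟩, hz⟩
        rw [Finset.sum_eq_zero_iff] at hz
        have : ∑ i : Fin (n+1), (i.1 + 1) * c i = 0 :=
          Finset.sum_eq_zero fun i _ => by rw [hz i (Finset.mem_univ i)]; ring
        omega
      rw [h1, h2]
      simp
  | succ k ih =>
    intro n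
    rw [T_rec]
    have step1 : ∀ p : Fin n,
        w (p.1 + 1) * ∑ f ∈ compositions (n - (p.1 + 1)) k, ∏ j, w (f j)
          = (Nat.factorial k : ℝ) * ∑ c ∈ countVectors n,
              (c p : ℝ) * (if ∑ i, c i = k + 1 then (1:ℝ) else 0) * Pw w c := by
      intro p
      rw [ih]
      have hA := lemA w (fun t => if t = k + 1 then (1:ℝ) else 0) n p
      have h2 : ∑ c ∈ countVectors (n - (p.1 + 1)),
            (if (∑ i, c i) + 1 = k + 1 then (1:ℝ) else 0) * Pw w c
          = ∑ c ∈ (countVectors (n - (p.1 + 1))).filter (fun c => ∑ i, c i = k), Pw w c := by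
        rw [Finset.sum_filter]
        refine Finset.sum_congr rfl fun c _ => ?_
        by_cases h : ∑ i, c i = k <;> simp [h]
      calc w (p.1 + 1) * ((Nat.factorial k : ℝ)
              * ∑ c ∈ (countVectors (n - (p.1 + 1))).filter (fun c => ∑ i, c i = k), Pw w c)
          = (Nat.factorial k : ℝ) * (w (p.1 + 1)
              * ∑ c ∈ countVectors (n - (p.1 + 1)),
                  (if (∑ i, c i) + 1 = k + 1 then (1:ℝ) else 0) * Pw w c) := by
            rw [h2]; ring
        _ = (Nat.factorial k : ℝ) * ∑ c ∈ countVectors n,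
              (c p : ℝ) * (if ∑ i, c i = k + 1 then (1:ℝ) else 0) * Pw w c := by
            rw [← hA]
    rw [Finset.sum_congr rfl fun p _ => step1 p]
    rw [← Finset.mul_sum, Finset.sum_comm]
    have inner : ∀ c ∈ countVectors n,
        ∑ p : Fin n, (c p : ℝ) * (if ∑ i, c i = k + 1 then (1:ℝ) else 0) * Pw w c
          = ((k : ℝ) + 1) * ((if ∑ i, c i = k + 1 then (1:ℝ) else 0) * Pw w c) := by
      intro c _
      by_cases h : ∑ i, c i = k + 1
      · have hcast : ∑ p : Fin n, (c p : ℝ) = (k : ℝ) + 1 := by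
          rw [← Nat.cast_sum, h]
          push_cast
          ring
        simp only [h, if_pos rfl]
        rw [← hcast, ← Finset.sum_mul, ← Finset.sum_mul]
        ring_nf
      · simp [h]
    rw [Finset.sum_congr rfl inner]
    rw [← Finset.mul_sum]
    have hfil : ∑ c ∈ countVectors n, (if ∑ i, c i = k + 1 then (1:ℝ) else 0) * Pw w c
        = ∑ c ∈ (countVectors n).filter (fun c => ∑ i, c i = k + 1), Pw w c := by
      rw [Finset.sum_filter]
      refine Finset.sum_congr rfl fun c _ => ?_
      by_cases h : ∑ i, c i = k + 1 <;> simp [h]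
    rw [hfil, Nat.factorial_succ]
    push_cast
    ring

/-- Expected number of blocks of size `l` under the Gibbs sampling formula. -/
theorem gibbsSampling_expected_size_l (α : ℝ) (hα : α < 1) (V : ℕ → ℕ → ℝ)
    (n l : ℕ) (hl : 1 ≤ l) (hln : l ≤ n) :
    ∑ c ∈ countVectors n, ((c ⟨l - 1, by omega⟩ : ℕ) : ℝ) * gibbsSampling α V n c =
      (n.choose l : ℝ) * risingFac (1 - α) (l - 1) *
        ∑ k ∈ Finset.Icc 1 (n - l + 1), V n k * genStirling α (n - l) (k - 1) := by
  set w : ℕ → ℝ := fun m => risingFac (1 - α) (m - 1) / (Nat.factorial m : ℝ) with hw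
  have hp : l - 1 < n := by omega
  have hgibbs : ∀ c : Fin n → ℕ, gibbsSampling α V n c
      = (Nat.factorial n : ℝ) * V n (∑ i, c i) * Pw w c := by
    intro c
    unfold gibbsSampling Pw
    congr 1
    refine Finset.prod_congr rfl fun i _ => ?_
    simp only [hw, Nat.add_sub_cancel, div_pow, div_div]
  have step0 : ∑ c ∈ countVectors n, ((c ⟨l - 1, hp⟩ : ℕ) : ℝ) * gibbsSampling α V n c
      = ∑ c ∈ countVectors n, ((c ⟨l - 1, hp⟩ : ℕ) : ℝ)
          * ((Nat.factorial n : ℝ) * V n (∑ i, c i)) * Pw w c := by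
    refine Finset.sum_congr rfl fun c _ => ?_
    rw [hgibbs c]
    ring
  rw [show (⟨l - 1, by omega⟩ : Fin n) = ⟨l - 1, hp⟩ from rfl, step0]
  have hA := lemA w (fun t => (Nat.factorial n : ℝ) * V n t) n ⟨l - 1, hp⟩
  simp only at hA
  rw [hA]
  have hval : n - ((⟨l - 1, hp⟩ : Fin n).1 + 1) = n - l := by
    simp only [Fin.val_mk]
    omega
  rw [hval, show (⟨l - 1, hp⟩ : Fin n).1 + 1 = l from by simp only [Fin.val_mk]; omega]
  set M := n - l with hM
  -- regroup by number of blocks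
  have hmap : ∀ c ∈ countVectors M, (∑ i, c i) ∈ Finset.range (M + 1) := by
    intro c hc
    rw [mem_countVectors] at hc
    rw [Finset.mem_range, Nat.lt_succ_iff]
    calc ∑ i, c i ≤ ∑ i, (i.1 + 1) * c i :=
          Finset.sum_le_sum fun i _ => Nat.le_mul_of_pos_left _ (Nat.succ_pos _)
      _ = M := hc.2
  have regroup := Finset.sum_fiberwise_of_maps_to hmap
    (fun c => (Nat.factorial n : ℝ) * V n ((∑ i, c i) + 1) * Pw w c)
  rw [show ∑ c ∈ countVectors M, (Nat.factorial n : ℝ) * V n ((∑ i, c i) + 1) * Pw w c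
      = ∑ j ∈ Finset.range (M + 1), ∑ c ∈ (countVectors M).filter (fun c => ∑ i, c i = j),
          (Nat.factorial n : ℝ) * V n ((∑ i, c i) + 1) * Pw w c from regroup.symm]
  have inner : ∀ j ∈ Finset.range (M + 1),
      ∑ c ∈ (countVectors M).filter (fun c => ∑ i, c i = j),
          (Nat.factorial n : ℝ) * V n ((∑ i, c i) + 1) * Pw w c
        = (Nat.factorial n : ℝ) * V n (j + 1)
            * ∑ c ∈ (countVectors M).filter (fun c => ∑ i, c i = j), Pw w c := by
    intro j _
    rw [Finset.mul_sum]
    refine Finset.sum_congr rfl fun c hc => ?_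
    rw [Finset.mem_filter] at hc
    rw [hc.2]
  rw [Finset.sum_congr rfl inner]
  -- genStirling in terms of the fibered sums
  have hgen : ∀ j : ℕ, genStirling α M j
      = (Nat.factorial M : ℝ)
          * ∑ c ∈ (countVectors M).filter (fun c => ∑ i, c i = j), Pw w c := by
    intro j
    unfold genStirling
    have hT : ∑ f ∈ compositions M j, ∏ i, risingFac (1 - α) (f i - 1)
          / (Nat.factorial (f i) : ℝ)
        = ∑ f ∈ compositions M j, ∏ i, w (f i) := rfl
    rw [hT, lemB w j M]
    have hj : (Nat.factorial j : ℝ) ≠ 0 := Nat.cast_ne_zero.2 (Nat.factorial_ne_zero j)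
    field_simp
  -- reindex RHS
  have hre : ∑ k ∈ Finset.Icc 1 (M + 1), V n k * genStirling α M (k - 1)
      = ∑ j ∈ Finset.range (M + 1), V n (j + 1) * genStirling α M j := by
    refine Finset.sum_nbij' (i := fun k => k - 1) (j := fun t => t + 1) ?_ ?_ ?_ ?_ ?_
    · intro k hk
      rw [Finset.mem_Icc] at hk
      show k - 1 ∈ Finset.range (M + 1)
      rw [Finset.mem_range]
      omega
    · intro t ht
      rw [Finset.mem_range] at ht
      show t + 1 ∈ Finset.Icc 1 (M + 1)
      rw [Finset.mem_Icc]
      omega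
    · intro k hk
      rw [Finset.mem_Icc] at hk
      show k - 1 + 1 = k
      omega
    · intro t ht
      show t + 1 - 1 = t
      omega
    · intro k hk
      rw [Finset.mem_Icc] at hk
      show V n k * genStirling α M (k - 1) = V n (k - 1 + 1) * genStirling α M (k - 1)
      have hk1 : k - 1 + 1 = k := by omega
      rw [hk1]
  rw [hre]
  have hc : ((n.choose l : ℕ) : ℝ) * (Nat.factorial l : ℝ) * (Nat.factorial M : ℝ)
      = (Nat.factorial n : ℝ) := by
    rw [hM]
    exact_mod_cast Nat.choose_mul_factorial_mul_factorial hln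
  have hlfac : (Nat.factorial l : ℝ) ≠ 0 := Nat.cast_ne_zero.2 (Nat.factorial_ne_zero l)
  rw [Finset.mul_sum, Finset.mul_sum]
  refine Finset.sum_congr rfl fun j _ => ?_
  rw [hgen j]
  have hwl : w l = risingFac (1 - α) (l - 1) / (Nat.factorial l : ℝ) := rfl
  rw [hwl]
  set U := ∑ c ∈ (countVectors M).filter (fun c => ∑ i, c i = j), Pw w c with hU
  field_simp
  linear_combination (-(risingFac (1 - α) (l - 1) * V n (j + 1) * U)) * hc
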